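/- The function u : [0,1] → ℝ² defined by the dyadic spiral (u(2^{-4k}) = (-2^{-2k}, 2^{-2k}), u(2^{-(4k+1)}) = (-2^{-2k}, -2^{-2k-1}), u(2^{-(4k+2)}) = (2^{-2k-1}, -2^{-2k-1}), u(2^{-(4k+3)}) = (2^{-2k-1}, 2^{-2k-2}), u(0)=0, linear interpolation in between) has bounded variation on [0,1], and each coordinate u_j can be written as m_j - m̄_j, a difference of two continuous non-decreasing functions starting at 0. -/

import Mathlib

open Set Matrix

/-- The vertices of Mandelbaum's dyadic spiral: `SpiralP n` is the value of the
spiral at the dyadic time `2 ^ (-n)`. -/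
noncomputable def SpiralP (n : ℕ) : Fin 2 → ℝ :=
  let k : ℤ := (n / 4 : ℕ)
  if n % 4 = 0 then ![-(2:ℝ) ^ (-2 * k), (2:ℝ) ^ (-2 * k)]
  else if n % 4 = 1 then ![-(2:ℝ) ^ (-2 * k), -(2:ℝ) ^ (-2 * k - 1)]
  else if n % 4 = 2 then ![(2:ℝ) ^ (-2 * k - 1), -(2:ℝ) ^ (-2 * k - 1)]
  else ![(2:ℝ) ^ (-2 * k - 1), (2:ℝ) ^ (-2 * k - 2)]

/-- `u : [0,1] → ℝ²` is the dyadic spiral: `u 0 = 0`, `u (2 ^ (-n)) = SpiralP n`,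
with linear interpolation on each interval `[2 ^ (-(n+1)), 2 ^ (-n)]`. -/
def IsSpiral (u : ℝ → Fin 2 → ℝ) : Prop :=
  u 0 = 0 ∧
  ∀ n : ℕ, ∀ s ∈ Set.Icc (0:ℝ) 1,
    u ((1 - s) * (2:ℝ) ^ (-(n:ℤ) - 1) + s * (2:ℝ) ^ (-(n:ℤ)))
      = fun j => (1 - s) * SpiralP (n + 1) j + s * SpiralP n j


/-- Piecewise-linear dyadic interpolation of a vertex sequence `P`. -/
noncomputable def dySpiral (P : ℕ → ℝ) (t : ℝ) : ℝ :=
  if t ≤ 0 then 0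
  else if 1 ≤ t then P 0
  else
    let n : ℕ := (-Int.log 2 t - 1).toNat
    let s : ℝ := t * 2 ^ ((n : ℤ) + 1) - 1
    (1 - s) * P (n + 1) + s * P n

lemma dySpiral_nonpos (P : ℕ → ℝ) {t : ℝ} (h : t ≤ 0) : dySpiral P t = 0 := by
  simp [dySpiral, h]

lemma dySpiral_one_le (P : ℕ → ℝ) {t : ℝ} (h1 : 1 ≤ t) : dySpiral P t = P 0 := by
  have : ¬ t ≤ 0 := by linarith
  simp [dySpiral, this, h1]

/-- For `t` strictly inside a dyadic segment, the log picks the right level. -/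
lemma intlog_eq {t : ℝ} {n : ℕ} (h1 : (2:ℝ) ^ (-(n:ℤ) - 1) ≤ t) (h2 : t < (2:ℝ) ^ (-(n:ℤ))) :
    Int.log 2 t = -(n:ℤ) - 1 := by
  have ht : 0 < t := lt_of_lt_of_le (by positivity) h1
  have hl : ((2:ℕ):ℝ) ^ (Int.log 2 t) ≤ t := Int.zpow_log_le_self (by norm_num) ht
  have hu : t < ((2:ℕ):ℝ) ^ (Int.log 2 t + 1) := Int.lt_zpow_succ_log_self (by norm_num) t
  push_cast at hl hu
  have e1 : (2:ℝ) ^ (Int.log 2 t) < (2:ℝ) ^ (-(n:ℤ)) := lt_of_le_of_lt hl h2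
  have e2 : (2:ℝ) ^ (-(n:ℤ) - 1) < (2:ℝ) ^ (Int.log 2 t + 1) := lt_of_le_of_lt h1 hu
  rw [zpow_lt_zpow_iff_right₀ (by norm_num : (1:ℝ) < 2)] at e1 e2
  omega

lemma dySpiral_eval (P : ℕ → ℝ) (n : ℕ) {s : ℝ} (hs0 : 0 ≤ s) (hs1 : s ≤ 1) :
    dySpiral P ((1 - s) * (2:ℝ) ^ (-(n:ℤ) - 1) + s * (2:ℝ) ^ (-(n:ℤ))) =
      (1 - s) * P (n + 1) + s * P n := by
  set t : ℝ := (1 - s) * (2:ℝ) ^ (-(n:ℤ) - 1) + s * (2:ℝ) ^ (-(n:ℤ)) with htdef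
  have h2 : (2:ℝ) ^ (-(n:ℤ)) = 2 * (2:ℝ) ^ (-(n:ℤ) - 1) := by
    rw [← zpow_one_add₀ (by norm_num : (2:ℝ) ≠ 0)]; ring_nf
  have ht : t = (1 + s) * (2:ℝ) ^ (-(n:ℤ) - 1) := by rw [htdef, h2]; ring
  have hp : (0:ℝ) < (2:ℝ) ^ (-(n:ℤ) - 1) := by positivity
  have ht0 : 0 < t := by rw [ht]; positivity
  rcases eq_or_lt_of_le hs1 with hs1' | hs1'
  · -- s = 1, t = 2 ^ (-n)
    subst hs1'
    have ht' : t = (2:ℝ) ^ (-(n:ℤ)) := by rw [ht, h2]; ring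
    rcases Nat.eq_zero_or_pos n with hn | hn
    · subst hn
      rw [dySpiral_one_le P (by rw [ht']; norm_num)]
      ring
    · have htlt : t < 1 := by
        rw [ht']
        calc (2:ℝ) ^ (-(n:ℤ)) < (2:ℝ) ^ (0:ℤ) := by
              rw [zpow_lt_zpow_iff_right₀ (by norm_num : (1:ℝ) < 2)]; omega
          _ = 1 := by norm_num
      have hlog : Int.log 2 t = -(n:ℤ) := by
        rw [ht']
        have := Int.log_zpow (R := ℝ) (b := 2) (by norm_num) (-(n:ℤ))
        push_cast at this ⊢
        exact this
      have hb0 : ¬ t ≤ 0 := by linarith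
      have hb1 : ¬ 1 ≤ t := by linarith
      rw [dySpiral, if_neg hb0, if_neg hb1]
      simp only [hlog]
      have hm : ((- -(n:ℤ) - 1).toNat : ℤ) = (n:ℤ) - 1 := by omega
      have hm' : (- -(n:ℤ) - 1).toNat = n - 1 := by omega
      have hs' : t * 2 ^ ((((- -(n:ℤ) - 1).toNat : ℕ) : ℤ) + 1) - 1 = 0 := by
        rw [hm, ht']
        rw [← zpow_add₀ (by norm_num : (2:ℝ) ≠ 0)]
        norm_num
      rw [hs']
      have : n - 1 + 1 = n := by omega
      rw [hm', this]
      ring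
  · -- s < 1 : t in [2^(-n-1), 2^(-n))
    have hle : (2:ℝ) ^ (-(n:ℤ) - 1) ≤ t := by rw [ht]; nlinarith
    have hlt : t < (2:ℝ) ^ (-(n:ℤ)) := by rw [ht, h2]; nlinarith
    have hlog := intlog_eq hle hlt
    have htlt1 : t < 1 := lt_of_lt_of_le hlt
      (by calc (2:ℝ) ^ (-(n:ℤ)) ≤ (2:ℝ) ^ (0:ℤ) :=
            zpow_le_zpow_right₀ (by norm_num) (by omega)
        _ = 1 := by norm_num)
    have hb0 : ¬ t ≤ 0 := by linarith
    have hb1 : ¬ 1 ≤ t := by linarith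
    rw [dySpiral, if_neg hb0, if_neg hb1]
    simp only [hlog]
    have hm' : (-(-(n:ℤ) - 1) - 1).toNat = n := by omega
    rw [hm']
    have hs' : t * 2 ^ ((n:ℤ) + 1) - 1 = s := by
      rw [ht]
      have : (2:ℝ) ^ (-(n:ℤ) - 1) * 2 ^ ((n:ℤ) + 1) = 1 := by
        rw [← zpow_add₀ (by norm_num : (2:ℝ) ≠ 0)]; norm_num
      nlinarith
    rw [hs']

lemma dySpiral_sub (P Q : ℕ → ℝ) (t : ℝ) :
    dySpiral (fun n => P n - Q n) t = dySpiral P t - dySpiral Q t := by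
  unfold dySpiral
  split_ifs <;> ring
lemma dySpiral_repr {t : ℝ} (h0 : 0 < t) (h1 : t < 1) :
    ∃ n : ℕ, ∃ s : ℝ, 0 ≤ s ∧ s < 1 ∧ (2:ℝ) ^ (-(n:ℤ) - 1) ≤ t ∧ t < (2:ℝ) ^ (-(n:ℤ)) ∧
      t = (1 - s) * (2:ℝ) ^ (-(n:ℤ) - 1) + s * (2:ℝ) ^ (-(n:ℤ)) := by
  have hl : ((2:ℕ):ℝ) ^ (Int.log 2 t) ≤ t := Int.zpow_log_le_self (by norm_num) h0
  have hu : t < ((2:ℕ):ℝ) ^ (Int.log 2 t + 1) := Int.lt_zpow_succ_log_self (by norm_num) t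
  push_cast at hl hu
  set e := Int.log 2 t with he
  have hneg : e < 0 := by
    by_contra h
    push_neg at h
    have : (1:ℝ) ≤ (2:ℝ) ^ e := by
      calc (1:ℝ) = (2:ℝ) ^ (0:ℤ) := by norm_num
        _ ≤ (2:ℝ) ^ e := zpow_le_zpow_right₀ (by norm_num) h
    linarith
  refine ⟨(-e - 1).toNat, t * 2 ^ (-e) - 1, ?_, ?_, ?_, ?_, ?_⟩
  all_goals have hn : ((-e - 1).toNat : ℤ) = -e - 1 := by omega
  · have : (1:ℝ) ≤ t * 2 ^ (-e) := by
      have h2 : (2:ℝ) ^ e * 2 ^ (-e) = 1 := by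
        rw [← zpow_add₀ (by norm_num : (2:ℝ) ≠ 0)]; norm_num
      have hp : (0:ℝ) < (2:ℝ) ^ (-e) := by positivity
      nlinarith
    linarith
  · have h2 : (2:ℝ) ^ (e + 1) * 2 ^ (-e) = 2 := by
      rw [← zpow_add₀ (by norm_num : (2:ℝ) ≠ 0)]; norm_num
    have hp : (0:ℝ) < (2:ℝ) ^ (-e) := by positivity
    nlinarith
  · rw [show -(((-e - 1).toNat : ℤ)) - 1 = e by omega]; exact hl
  · rw [show -(((-e - 1).toNat : ℤ)) = e + 1 by omega]; exact hu
  · rw [show -(((-e - 1).toNat : ℤ)) - 1 = e by omega,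
      show -(((-e - 1).toNat : ℤ)) = e + 1 by omega]
    have h2 : (2:ℝ) ^ (e + 1) = 2 * (2:ℝ) ^ e := by
      rw [← zpow_one_add₀ (by norm_num : (2:ℝ) ≠ 0)]; ring_nf
    have h3 : (2:ℝ) ^ e * 2 ^ (-e) = 1 := by
      rw [← zpow_add₀ (by norm_num : (2:ℝ) ≠ 0)]; norm_num
    linear_combination (1 - t * 2 ^ (-e)) * h2 - t * h3

section
variable {P : ℕ → ℝ} (hsucc : ∀ n, P (n + 1) ≤ P n) (hpos : ∀ n, 0 ≤ P n)

include hsucc hpos in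
lemma dySpiral_mem_Icc {t : ℝ} (h0 : 0 < t) (h1 : t < 1) :
    ∃ n : ℕ, (2:ℝ) ^ (-(n:ℤ) - 1) ≤ t ∧ t < (2:ℝ) ^ (-(n:ℤ)) ∧
      P (n + 1) ≤ dySpiral P t ∧ dySpiral P t ≤ P n := by
  obtain ⟨n, s, hs0, hs1, hl, hu, ht⟩ := dySpiral_repr h0 h1
  refine ⟨n, hl, hu, ?_, ?_⟩
  · rw [ht, dySpiral_eval P n hs0 hs1.le]; nlinarith [hsucc n]
  · rw [ht, dySpiral_eval P n hs0 hs1.le]; nlinarith [hsucc n]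

include hsucc hpos in
lemma dySpiral_nonneg (t : ℝ) : 0 ≤ dySpiral P t := by
  rcases le_or_gt t 0 with h | h
  · rw [dySpiral_nonpos P h]
  rcases le_or_gt 1 t with h1 | h1
  · rw [dySpiral_one_le P h1]; exact hpos 0
  obtain ⟨n, _, _, hl, _⟩ := dySpiral_mem_Icc hsucc hpos h h1
  exact le_trans (hpos (n + 1)) hl

include hsucc hpos in
lemma dySpiral_le_top (t : ℝ) : dySpiral P t ≤ P 0 := by
  have hanti : Antitone P := antitone_nat_of_succ_le hsucc
  rcases le_or_gt t 0 with h | h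
  · rw [dySpiral_nonpos P h]; exact hpos 0
  rcases le_or_gt 1 t with h1 | h1
  · rw [dySpiral_one_le P h1]
  obtain ⟨n, _, _, _, hu⟩ := dySpiral_mem_Icc hsucc hpos h h1
  exact hu.trans (hanti (Nat.zero_le n))

include hsucc hpos in
lemma dySpiral_mono : Monotone (dySpiral P) := by
  have hanti : Antitone P := antitone_nat_of_succ_le hsucc
  intro a b hab
  rcases le_or_gt a 0 with ha | ha
  · rw [dySpiral_nonpos P ha]; exact dySpiral_nonneg hsucc hpos b
  have hb : 0 < b := lt_of_lt_of_le ha hab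
  rcases le_or_gt 1 a with ha1 | ha1
  · rw [dySpiral_one_le P ha1, dySpiral_one_le P (le_trans ha1 hab)]
  rcases le_or_gt 1 b with hb1 | hb1
  · rw [dySpiral_one_le P hb1]; exact dySpiral_le_top hsucc hpos a
  -- both in (0,1)
  obtain ⟨na, sa, hsa0, hsa1, hla, hua, hta⟩ := dySpiral_repr ha ha1
  obtain ⟨nb, sb, hsb0, hsb1, hlb, hub, htb⟩ := dySpiral_repr hb hb1
  have hnba : nb ≤ na := by
    by_contra h
    push_neg at h
    have : (2:ℝ) ^ (-(nb:ℤ)) ≤ (2:ℝ) ^ (-(na:ℤ) - 1) :=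
      zpow_le_zpow_right₀ (by norm_num) (by omega)
    linarith
  rcases eq_or_lt_of_le hnba with heq | hlt
  · subst heq
    have hc : (0:ℝ) < (2:ℝ) ^ (-(nb:ℤ) - 1) := by positivity
    have h2 : (2:ℝ) ^ (-(nb:ℤ)) = 2 * (2:ℝ) ^ (-(nb:ℤ) - 1) := by
      rw [← zpow_one_add₀ (by norm_num : (2:ℝ) ≠ 0)]; ring_nf
    have hss : sa ≤ sb := by
      rw [hta, htb, h2] at hab
      nlinarith
    rw [hta, htb, dySpiral_eval P nb hsa0 hsa1.le, dySpiral_eval P nb hsb0 hsb1.le]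
    nlinarith [hsucc nb]
  · have h1 : dySpiral P a ≤ P na := by
      rw [hta, dySpiral_eval P na hsa0 hsa1.le]; nlinarith [hsucc na]
    have h2 : P (nb + 1) ≤ dySpiral P b := by
      rw [htb, dySpiral_eval P nb hsb0 hsb1.le]; nlinarith [hsucc nb]
    exact h1.trans ((hanti (by omega : nb + 1 ≤ na)).trans h2)

include hsucc hpos in
lemma dySpiral_surjOn (htend : Filter.Tendsto P Filter.atTop (nhds 0)) :
    ∀ y ∈ Icc 0 (P 0), ∃ t, dySpiral P t = y := by
  rintro y ⟨hy0, hy1⟩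
  rcases eq_or_lt_of_le hy0 with h0 | h0
  · exact ⟨0, by rw [dySpiral_nonpos P le_rfl, ← h0]⟩
  have hex : ∃ n, P n < y := by
    have := htend.eventually (Filter.Tendsto.eventually_lt_const h0 Filter.tendsto_id)
    simpa using (this.exists)
  classical
  have hfind : P (Nat.find hex) < y := Nat.find_spec hex
  have hn₀pos : Nat.find hex ≠ 0 := by
    intro h
    rw [h] at hfind
    linarith
  obtain ⟨n, hn⟩ : ∃ n, Nat.find hex = n + 1 := ⟨Nat.find hex - 1, by omega⟩
  rw [hn] at hfind
  have hyle : y ≤ P n := by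
    have := Nat.find_min hex (m := n) (by omega)
    linarith [not_lt.mp this]
  have hd : 0 < P n - P (n + 1) := by linarith
  set s : ℝ := (y - P (n + 1)) / (P n - P (n + 1)) with hs
  have hs0 : 0 ≤ s := div_nonneg (by linarith) hd.le
  have hs1 : s ≤ 1 := by
    rw [div_le_one hd]; linarith
  refine ⟨(1 - s) * (2:ℝ) ^ (-(n:ℤ) - 1) + s * (2:ℝ) ^ (-(n:ℤ)), ?_⟩
  rw [dySpiral_eval P n hs0 hs1]
  have hsm : s * (P n - P (n + 1)) = y - P (n + 1) := by rw [hs]; exact div_mul_cancel₀ _ hd.ne'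
  linear_combination hsm

section
variable {P : ℕ → ℝ} (f : ℝ → ℝ) (hm : Monotone f) (c : ℝ)
  (h0 : ∀ t, 0 ≤ f t) (h1 : ∀ t, f t ≤ c)
  (hsurj : ∀ y ∈ Icc 0 c, ∃ t, f t = y)

include hm h0 h1 hsurj in
lemma mono_continuous : Continuous f := by
  rw [continuous_iff_continuousAt]
  intro a
  rw [continuousAt_iff_continuous_left_right]
  constructor
  · rcases eq_or_lt_of_le (h0 a) with hfa | hfa
    · have hconst : ∀ x ∈ Iic a, f x = 0 := fun x hx =>
        le_antisymm (by rw [hfa]; exact hm hx) (h0 x)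
      exact (continuousWithinAt_const (b := (0:ℝ))).congr hconst (hconst a self_mem_Iic)
    · apply continuousWithinAt_left_of_monotoneOn_of_exists_between
        (hm.monotoneOn univ) Filter.univ_mem
      intro b hb
      have hmax : max b 0 < f a := max_lt hb hfa
      obtain ⟨t, ht⟩ := hsurj ((max b 0 + f a) / 2)
        ⟨by linarith [le_max_right b 0], by linarith [h1 a, le_max_right b 0]⟩
      refine ⟨t, mem_univ t, ?_, ?_⟩
      · rw [ht]; linarith [le_max_left b 0]
      · rw [ht]; linarith
  · rcases eq_or_lt_of_le (h1 a) with hfa | hfa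
    · have hconst : ∀ x ∈ Ici a, f x = c := fun x hx =>
        le_antisymm (h1 x) (by rw [← hfa]; exact hm hx)
      exact (continuousWithinAt_const (b := c)).congr hconst (hconst a self_mem_Ici)
    · apply continuousWithinAt_right_of_monotoneOn_of_exists_between
        (hm.monotoneOn univ) Filter.univ_mem
      intro b hb
      have hmin : f a < min b c := lt_min hb hfa
      obtain ⟨t, ht⟩ := hsurj ((f a + min b c) / 2)
        ⟨by linarith [h0 a], by linarith [min_le_right b c]⟩
      refine ⟨t, mem_univ t, ?_, ?_⟩
      · rw [ht]; linarith
      · rw [ht]; linarith [min_le_left b c]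
end

noncomputable def spiralVx (n : ℕ) : ℝ := (2:ℝ) ^ (-2 * ((n / 4 : ℕ) : ℤ))
noncomputable def spiralWx (n : ℕ) : ℝ :=
  if n % 4 ≤ 1 then (2:ℝ) ^ (-2 * ((n / 4 : ℕ) : ℤ) + 1) else (2:ℝ) ^ (-2 * ((n / 4 : ℕ) : ℤ) - 1)
noncomputable def spiralVy (n : ℕ) : ℝ :=
  if n % 4 = 0 then (2:ℝ) ^ (-2 * ((n / 4 : ℕ) : ℤ) + 1) else (2:ℝ) ^ (-2 * ((n / 4 : ℕ) : ℤ) - 1)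
noncomputable def spiralWy (n : ℕ) : ℝ :=
  if n % 4 ≤ 2 then (2:ℝ) ^ (-2 * ((n / 4 : ℕ) : ℤ)) else (2:ℝ) ^ (-2 * ((n / 4 : ℕ) : ℤ) - 2)

lemma spiralP_eq (n : ℕ) :
    SpiralP n 0 = spiralVx n - spiralWx n ∧ SpiralP n 1 = spiralVy n - spiralWy n := by
  have e1 : ∀ k : ℤ, (2:ℝ) ^ (-2*k+1) = 2 * (2:ℝ) ^ (-2*k) := fun k => by
    rw [zpow_add₀ (by norm_num : (2:ℝ) ≠ 0)]; norm_num [mul_comm]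
  have e2 : ∀ k : ℤ, (2:ℝ) ^ (-2*k-1) = (2:ℝ) ^ (-2*k) / 2 := fun k => by
    rw [zpow_sub₀ (by norm_num : (2:ℝ) ≠ 0)]; norm_num
  have e3 : ∀ k : ℤ, (2:ℝ) ^ (-2*k-2) = (2:ℝ) ^ (-2*k) / 4 := fun k => by
    rw [zpow_sub₀ (by norm_num : (2:ℝ) ≠ 0)]; norm_num
  have h : n % 4 = 0 ∨ n % 4 = 1 ∨ n % 4 = 2 ∨ n % 4 = 3 := by omega
  rcases h with h | h | h | h <;>
    simp [SpiralP, spiralVx, spiralWx, spiralVy, spiralWy, h] <;>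
    constructor <;>
    · simp only [zpow_sub₀ (show (2:ℝ) ≠ 0 by norm_num),
        zpow_add₀ (show (2:ℝ) ≠ 0 by norm_num)]
      norm_num
      ring_nf
      try norm_num [zpow_sub₀ (show (2:ℝ) ≠ 0 by norm_num)]

lemma spiral_succ_le :
    (∀ n, spiralVx (n+1) ≤ spiralVx n) ∧ (∀ n, spiralWx (n+1) ≤ spiralWx n) ∧
    (∀ n, spiralVy (n+1) ≤ spiralVy n) ∧ (∀ n, spiralWy (n+1) ≤ spiralWy n) := by
  refine ⟨fun n => ?_, fun n => ?_, fun n => ?_, fun n => ?_⟩ <;>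
  · simp only [spiralVx, spiralWx, spiralVy, spiralWy]
    try split_ifs
    all_goals apply zpow_le_zpow_right₀ (by norm_num : (1:ℝ) ≤ 2)
    all_goals omega

lemma spiral_pos :
    (∀ n, 0 ≤ spiralVx n) ∧ (∀ n, 0 ≤ spiralWx n) ∧
    (∀ n, 0 ≤ spiralVy n) ∧ (∀ n, 0 ≤ spiralWy n) := by
  refine ⟨fun n => ?_, fun n => ?_, fun n => ?_, fun n => ?_⟩ <;>
  · simp only [spiralVx, spiralWx, spiralVy, spiralWy]
    try split_ifs
    all_goals positivity

lemma spiral_bound :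
    (∀ n, spiralVx n ≤ 2 * (1/4:ℝ) ^ (n / 4)) ∧ (∀ n, spiralWx n ≤ 2 * (1/4:ℝ) ^ (n / 4)) ∧
    (∀ n, spiralVy n ≤ 2 * (1/4:ℝ) ^ (n / 4)) ∧ (∀ n, spiralWy n ≤ 2 * (1/4:ℝ) ^ (n / 4)) := by
  have key : ∀ q : ℕ, (2:ℝ) ^ (-2*(q:ℤ)+1) = 2 * (1/4:ℝ) ^ q := by
    intro q
    rw [zpow_add₀ (by norm_num : (2:ℝ) ≠ 0)]
    have : (2:ℝ) ^ (-2*(q:ℤ)) = (1/4:ℝ) ^ q := by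
      rw [show (-2*(q:ℤ)) = (-2) * (q:ℤ) from rfl, _root_.zpow_mul, zpow_natCast]
      norm_num
    rw [this]; norm_num [mul_comm]
  refine ⟨fun n => ?_, fun n => ?_, fun n => ?_, fun n => ?_⟩ <;>
  · rw [← key (n / 4)]
    simp only [spiralVx, spiralWx, spiralVy, spiralWy]
    try split_ifs
    all_goals apply zpow_le_zpow_right₀ (by norm_num : (1:ℝ) ≤ 2)
    all_goals omega

lemma spiral_aux_tendsto :
    Filter.Tendsto (fun n : ℕ => 2 * (1/4:ℝ) ^ (n / 4)) Filter.atTop (nhds 0) := by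
  have h1 : Filter.Tendsto (fun n : ℕ => n / 4) Filter.atTop Filter.atTop :=
    Filter.tendsto_atTop_atTop.2 fun b => ⟨4 * b, fun n hn => by omega⟩
  have h2 : Filter.Tendsto (fun q : ℕ => (1/4:ℝ) ^ q) Filter.atTop (nhds 0) :=
    tendsto_pow_atTop_nhds_zero_of_lt_one (by norm_num) (by norm_num)
  have := (h2.comp h1).const_mul (2:ℝ)
  simpa using this

lemma spiral_u_eq {u : ℝ → Fin 2 → ℝ} (hu : IsSpiral u) {t : ℝ} (h0 : 0 < t) (h1 : t ≤ 1)
    (j : Fin 2) : u t j = dySpiral (fun n => SpiralP n j) t := by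
  rcases eq_or_lt_of_le h1 with h1' | h1'
  · subst h1'
    have h := hu.2 0 1 ⟨zero_le_one, le_rfl⟩
    norm_num at h
    rw [dySpiral_one_le _ le_rfl, h]
  · obtain ⟨n, s, hs0, hs1, _, _, ht⟩ := dySpiral_repr h0 h1'
    have hc := congrFun (hu.2 n s ⟨hs0, hs1.le⟩) j
    rw [ht, hc, ← dySpiral_eval (fun n => SpiralP n j) n hs0 hs1.le]

lemma edist_sub_sub_le' (a b c d : ℝ) : edist (a - b) (c - d) ≤ edist a c + edist b d := by
  rw [edist_dist, edist_dist, edist_dist]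
  calc ENNReal.ofReal (dist (a - b) (c - d)) ≤ ENNReal.ofReal (dist a c + dist b d) :=
        ENNReal.ofReal_le_ofReal (dist_sub_sub_le a b c d)
    _ ≤ _ := ENNReal.ofReal_add_le

theorem spiral_boundedVariation (u : ℝ → Fin 2 → ℝ) (hu : IsSpiral u) :
    BoundedVariationOn u (Set.Icc 0 1) ∧
    ∀ j : Fin 2, ∃ m mbar : ℝ → ℝ,
      ContinuousOn m (Set.Icc 0 1) ∧ ContinuousOn mbar (Set.Icc 0 1) ∧
      MonotoneOn m (Set.Icc 0 1) ∧ MonotoneOn mbar (Set.Icc 0 1) ∧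
      m 0 = 0 ∧ mbar 0 = 0 ∧
      ∀ t ∈ Set.Icc (0:ℝ) 1, u t j = m t - mbar t := by
  classical
  have key : ∀ P : ℕ → ℝ, (∀ n, P (n + 1) ≤ P n) → (∀ n, 0 ≤ P n) →
      (∀ n, P n ≤ 2 * (1/4:ℝ) ^ (n / 4)) →
      Monotone (dySpiral P) ∧ Continuous (dySpiral P) ∧
        eVariationOn (dySpiral P) (Icc (0:ℝ) 1) ≠ ⊤ := by
    intro P hs hp hb
    have ht : Filter.Tendsto P Filter.atTop (nhds 0) :=
      squeeze_zero hp hb spiral_aux_tendsto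
    have hm := dySpiral_mono hs hp
    have hc := mono_continuous (dySpiral P) hm (P 0) (dySpiral_nonneg hs hp)
      (dySpiral_le_top hs hp) (dySpiral_surjOn hs hp ht)
    refine ⟨hm, hc, ?_⟩
    have h2 := (hm.monotoneOn (Icc (0:ℝ) 1)).eVariationOn_le (a := 0) (b := 1)
      (left_mem_Icc.2 zero_le_one) (right_mem_Icc.2 zero_le_one)
    rw [Set.inter_self] at h2
    exact ne_top_of_le_ne_top ENNReal.ofReal_ne_top h2
  obtain ⟨mVx, cVx, bVx⟩ := key spiralVx spiral_succ_le.1 spiral_pos.1 spiral_bound.1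
  obtain ⟨mWx, cWx, bWx⟩ := key spiralWx spiral_succ_le.2.1 spiral_pos.2.1 spiral_bound.2.1
  obtain ⟨mVy, cVy, bVy⟩ := key spiralVy spiral_succ_le.2.2.1 spiral_pos.2.2.1 spiral_bound.2.2.1
  obtain ⟨mWy, cWy, bWy⟩ :=
    key spiralWy spiral_succ_le.2.2.2 spiral_pos.2.2.2 spiral_bound.2.2.2
  have hPx : (fun n => SpiralP n 0) = fun n => spiralVx n - spiralWx n :=
    funext fun n => (spiralP_eq n).1
  have hPy : (fun n => SpiralP n 1) = fun n => spiralVy n - spiralWy n :=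
    funext fun n => (spiralP_eq n).2
  have hx : ∀ t ∈ Icc (0:ℝ) 1, u t 0 = dySpiral spiralVx t - dySpiral spiralWx t := by
    rintro t ⟨ht0, ht1⟩
    rcases eq_or_lt_of_le ht0 with h0 | h0
    · rw [← h0, hu.1, dySpiral_nonpos _ le_rfl, dySpiral_nonpos _ le_rfl]
      simp
    · rw [spiral_u_eq hu h0 ht1 0, hPx, dySpiral_sub]
  have hy : ∀ t ∈ Icc (0:ℝ) 1, u t 1 = dySpiral spiralVy t - dySpiral spiralWy t := by
    rintro t ⟨ht0, ht1⟩
    rcases eq_or_lt_of_le ht0 with h0 | h0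
    · rw [← h0, hu.1, dySpiral_nonpos _ le_rfl, dySpiral_nonpos _ le_rfl]
      simp
    · rw [spiral_u_eq hu h0 ht1 1, hPy, dySpiral_sub]
  constructor
  · -- bounded variation
    set U : ℝ → Fin 2 → ℝ := fun t =>
      ![dySpiral spiralVx t - dySpiral spiralWx t, dySpiral spiralVy t - dySpiral spiralWy t]
      with hU
    have hEq : EqOn u U (Icc (0:ℝ) 1) := by
      intro t ht
      funext j
      fin_cases j
      · show u t 0 = U t 0
        rw [hx t ht]; simp [hU]
      · show u t 1 = U t 1
        rw [hy t ht]; simp [hU]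
    rw [BoundedVariationOn, eVariationOn.eq_of_eqOn hEq]
    have hbound : eVariationOn U (Icc (0:ℝ) 1) ≤
        (eVariationOn (dySpiral spiralVx) (Icc (0:ℝ) 1) +
          eVariationOn (dySpiral spiralWx) (Icc (0:ℝ) 1)) +
        (eVariationOn (dySpiral spiralVy) (Icc (0:ℝ) 1) +
          eVariationOn (dySpiral spiralWy) (Icc (0:ℝ) 1)) := by
      apply iSup_le
      rintro ⟨N, q, hq, hqs⟩
      have hpt : ∀ i : ℕ, edist (U (q (i + 1))) (U (q i)) ≤
          (edist (dySpiral spiralVx (q (i + 1))) (dySpiral spiralVx (q i)) +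
            edist (dySpiral spiralWx (q (i + 1))) (dySpiral spiralWx (q i))) +
          (edist (dySpiral spiralVy (q (i + 1))) (dySpiral spiralVy (q i)) +
            edist (dySpiral spiralWy (q (i + 1))) (dySpiral spiralWy (q i))) := by
        intro i
        rw [edist_pi_def]
        apply Finset.sup_le
        intro j _
        fin_cases j
        · refine le_trans ?_ le_self_add
          simpa [hU] using edist_sub_sub_le' (dySpiral spiralVx (q (i + 1)))
            (dySpiral spiralWx (q (i + 1))) (dySpiral spiralVx (q i)) (dySpiral spiralWx (q i))
        · refine le_trans ?_ le_add_self
          simpa [hU] using edist_sub_sub_le' (dySpiral spiralVy (q (i + 1)))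
            (dySpiral spiralWy (q (i + 1))) (dySpiral spiralVy (q i)) (dySpiral spiralWy (q i))
      calc ∑ i ∈ Finset.range N, edist (U (q (i + 1))) (U (q i)) ≤
          ∑ i ∈ Finset.range N,
            ((edist (dySpiral spiralVx (q (i + 1))) (dySpiral spiralVx (q i)) +
              edist (dySpiral spiralWx (q (i + 1))) (dySpiral spiralWx (q i))) +
            (edist (dySpiral spiralVy (q (i + 1))) (dySpiral spiralVy (q i)) +
              edist (dySpiral spiralWy (q (i + 1))) (dySpiral spiralWy (q i)))) :=
            Finset.sum_le_sum fun i _ => hpt i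
        _ = (∑ i ∈ Finset.range N,
              edist (dySpiral spiralVx (q (i + 1))) (dySpiral spiralVx (q i)) +
            ∑ i ∈ Finset.range N,
              edist (dySpiral spiralWx (q (i + 1))) (dySpiral spiralWx (q i))) +
            (∑ i ∈ Finset.range N,
              edist (dySpiral spiralVy (q (i + 1))) (dySpiral spiralVy (q i)) +
            ∑ i ∈ Finset.range N,
              edist (dySpiral spiralWy (q (i + 1))) (dySpiral spiralWy (q i))) := by
            rw [← Finset.sum_add_distrib, ← Finset.sum_add_distrib, ← Finset.sum_add_distrib]
        _ ≤ _ := by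
            gcongr <;> exact eVariationOn.sum_le hq hqs
    intro htop
    rw [htop] at hbound
    have : (⊤ : ENNReal) < ⊤ := lt_of_le_of_lt hbound (by
      refine ENNReal.add_lt_top.2 ⟨?_, ?_⟩ <;>
        refine ENNReal.add_lt_top.2 ⟨?_, ?_⟩ <;>
        rwa [lt_top_iff_ne_top])
    exact absurd this (lt_irrefl _)
  · intro j
    fin_cases j
    · exact ⟨dySpiral spiralVx, dySpiral spiralWx, cVx.continuousOn, cWx.continuousOn,
        mVx.monotoneOn _, mWx.monotoneOn _, dySpiral_nonpos _ le_rfl, dySpiral_nonpos _ le_rfl,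
        hx⟩
    · exact ⟨dySpiral spiralVy, dySpiral spiralWy, cVy.continuousOn, cWy.continuousOn,
        mVy.monotoneOn _, mWy.monotoneOn _, dySpiral_nonpos _ le_rfl, dySpiral_nonpos _ le_rfl,
        hy⟩
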